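/- For every integer $N\ge 2$ there exist pairwise disjoint measurable sets $A_1,\dots,A_{2N}\subset[0,1]$ of positive measure such that the simple function $f=\sum_{j=1}^{2N}a_j\chi_{A_j}$ with coefficients $a_j=1/(2N\,\varphi(\lambda(A_j)))$ satisfies $\|f\|_{\varphi,\psi}\ge \frac{2^c-1}{8}\,\psi(N)$. -/

import Mathlib

open MeasureTheory ENNReal Set Filter Topology

noncomputable section

/-- Lebesgue measure restricted to the interval `[0,1]`. -/
def μ01 : Measure ℝ := volume.restrict (Set.Icc 0 1)

/-- `φ : [0,1] → [0,∞)` is concave, non-decreasing, and vanishes only at the origin. -/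
structure IsPhi (φ : ℝ → ℝ) : Prop where
  concave : ConcaveOn ℝ (Set.Icc 0 1) φ
  mono : MonotoneOn φ (Set.Icc 0 1)
  zero : φ 0 = 0
  pos : ∀ t : ℝ, 0 < t → t ≤ 1 → 0 < φ t

/-- `ψ : [0,∞) → [0,∞)` is concave, non-decreasing, and vanishes only at the origin. -/
structure IsPsi (ψ : ℝ → ℝ) : Prop where
  concave : ConcaveOn ℝ (Set.Ici 0) ψ
  mono : MonotoneOn ψ (Set.Ici 0)
  zero : ψ 0 = 0
  pos : ∀ t : ℝ, 0 < t → 0 < ψ t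

/-- A sequence `g` of nonnegative `L^∞` functions with `|f| ≤ ∑ₙ gₙ` a.e. -/
def Admissible (f : ℝ → ℝ) (g : ℕ → ℝ → ℝ) : Prop :=
  (∀ n, AEMeasurable (g n) μ01) ∧
  (∀ n, eLpNorm (g n) ⊤ μ01 < ⊤) ∧
  (∀ n x, 0 ≤ g n x) ∧
  (∀ᵐ x ∂μ01, ENNReal.ofReal |f x| ≤ ∑' n : ℕ, ENNReal.ofReal (g n x))

/-- The cost `∑ₙ ψ(n) ‖gₙ‖_∞ φ(‖gₙ‖₁/‖gₙ‖_∞)` of a decomposition (index shifted by 1;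
`0/0 = 0` by the `ℝ≥0∞` division convention, and `φ 0 = 0`). -/
def seqCost (φ ψ : ℝ → ℝ) (g : ℕ → ℝ → ℝ) : ℝ≥0∞ :=
  ∑' n : ℕ, ENNReal.ofReal
    (ψ ((n : ℝ) + 1) * (eLpNorm (g n) ⊤ μ01).toReal *
      φ ((eLpNorm (g n) 1 μ01 / eLpNorm (g n) ⊤ μ01).toReal))

/-- The quasi-norm `‖f‖_{φ,ψ}` (equal to `∞` when no admissible decomposition exists). -/
def QANorm (φ ψ : ℝ → ℝ) (f : ℝ → ℝ) : ℝ≥0∞ :=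
  ⨅ (g : ℕ → ℝ → ℝ) (_ : Admissible f g), seqCost φ ψ g

/-- Membership in the space `QA_{φ,ψ}`. -/
def MemQA (φ ψ : ℝ → ℝ) (f : ℝ → ℝ) : Prop :=
  AEMeasurable f μ01 ∧ QANorm φ ψ f < ⊤

/-- The decreasing rearrangement `f*` of `f` on `[0,1]`. -/
def decRearr (f : ℝ → ℝ) (t : ℝ) : ℝ :=
  sInf {s : ℝ | 0 ≤ s ∧ μ01 {x | s < |f x|} ≤ ENNReal.ofReal t}

/-- The limit `ζ(0⁺)` of a non-decreasing function `ζ` on `[0,1]`. -/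
def limZero (ζ : ℝ → ℝ) : ℝ := sInf (ζ '' Set.Ioc 0 1)

/-- The Lorentz norm `‖f‖_{Λ_ζ} = ∫₀¹ f* dζ = ‖f‖_∞ ζ(0⁺) + ∫₀¹ f*(s) ζ'(s) ds`
(for `ζ` concave the derivative exists a.e. and `ζ` is absolutely continuous on `(0,1]`). -/
def lorentzNorm (ζ : ℝ → ℝ) (f : ℝ → ℝ) : ℝ≥0∞ :=
  eLpNorm f ⊤ μ01 * ENNReal.ofReal (limZero ζ) +
    ∫⁻ s in Set.Ioc (0:ℝ) 1, ENNReal.ofReal (decRearr f s * deriv ζ s)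

/-- Membership in the Lorentz space `Λ_ζ`. -/
def MemLorentz (ζ : ℝ → ℝ) (f : ℝ → ℝ) : Prop :=
  AEMeasurable f μ01 ∧ lorentzNorm ζ f < ⊤

/-- The quasi-concave function `φ_s(t) = inf_n max{sₙ,t} (φ(sₙ)/sₙ) ψ(n)` (index shifted by 1). -/
def phiSeq (φ ψ : ℝ → ℝ) (s : ℕ → ℝ) (t : ℝ) : ℝ :=
  if t = 0 then 0 else ⨅ n : ℕ, max (s n) t * (φ (s n) / s n) * ψ ((n : ℝ) + 1)

/-- The function `τ(t) = φ(t) ψ(logbar(φ(t)/t))` with `logbar t = 1 + log⁺ t`. -/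
def tauF (φ ψ : ℝ → ℝ) (t : ℝ) : ℝ :=
  if t = 0 then 0 else φ t * ψ (1 + max (Real.log (φ t / t)) 0)

section Aux

lemma aux_univ : μ01 Set.univ = 1 := by
  rw [μ01, Measure.restrict_apply_univ, Real.volume_Icc]
  norm_num

lemma aux_ofReal_nnnorm (x : ℝ) (hx : 0 ≤ x) : (‖x‖₊ : ℝ≥0∞) = ENNReal.ofReal x := by
  rw [← Real.enorm_eq_ofReal hx, enorm_eq_nnnorm]

lemma aux_L1_eq (g : ℝ → ℝ) (hnn : ∀ x, 0 ≤ g x) :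
    eLpNorm g 1 μ01 = ∫⁻ x, ENNReal.ofReal (g x) ∂μ01 := by
  rw [eLpNorm_one_eq_lintegral_enorm]
  congr 1
  ext x
  exact aux_ofReal_nnnorm (g x) (hnn x)

lemma aux_W_le_L1 (g : ℝ → ℝ) (hnn : ∀ x, 0 ≤ g x) (s : Set ℝ) :
    ∫⁻ x in s, ENNReal.ofReal (g x) ∂μ01 ≤ eLpNorm g 1 μ01 := by
  rw [aux_L1_eq g hnn]
  exact setLIntegral_le_lintegral s _

lemma aux_W_le_H (g : ℝ → ℝ) (hnn : ∀ x, 0 ≤ g x) (s : Set ℝ) :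
    ∫⁻ x in s, ENNReal.ofReal (g x) ∂μ01 ≤ eLpNorm g ⊤ μ01 * μ01 s := by
  have hae : ∀ᵐ x ∂μ01, ENNReal.ofReal (g x) ≤ eLpNorm g ⊤ μ01 := by
    have := ae_le_eLpNormEssSup (f := g) (μ := μ01)
    rw [eLpNorm_exponent_top]
    filter_upwards [this] with x hx
    rw [← aux_ofReal_nnnorm (g x) (hnn x)]
    exact hx
  calc ∫⁻ x in s, ENNReal.ofReal (g x) ∂μ01 ≤ ∫⁻ _ in s, eLpNorm g ⊤ μ01 ∂μ01 :=
        lintegral_mono_ae (ae_restrict_of_ae hae)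
    _ = eLpNorm g ⊤ μ01 * μ01 s := by rw [setLIntegral_const]

lemma aux_L1_le_H (g : ℝ → ℝ) (hnn : ∀ x, 0 ≤ g x) :
    eLpNorm g 1 μ01 ≤ eLpNorm g ⊤ μ01 := by
  rw [aux_L1_eq g hnn]
  have := aux_W_le_H g hnn Set.univ
  rw [Measure.restrict_univ] at this
  calc ∫⁻ x, ENNReal.ofReal (g x) ∂μ01 ≤ eLpNorm g ⊤ μ01 * μ01 Set.univ := this
    _ = eLpNorm g ⊤ μ01 := by rw [aux_univ, mul_one]

lemma aux_slope (φ : ℝ → ℝ) (hconc : ConcaveOn ℝ (Set.Icc 0 1) φ) (hz : φ 0 = 0)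
    (s t : ℝ) (hs : 0 < s) (hst : s ≤ t) (ht : t ≤ 1) : s * φ t ≤ t * φ s := by
  have h0 : (0:ℝ) ∈ Set.Icc (0:ℝ) 1 := by constructor <;> norm_num
  have htm : t ∈ Set.Icc (0:ℝ) 1 := ⟨by linarith, ht⟩
  have ha : 0 ≤ 1 - s/t := by
    have : s/t ≤ 1 := by
      rw [div_le_one (by linarith)]; exact hst
    linarith
  have hb : 0 ≤ s/t := div_nonneg hs.le (by linarith)
  have := hconc.2 h0 htm ha hb (by ring)
  have heq : (1 - s/t) • (0:ℝ) + (s/t) • t = s := by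
    have htpos : (0:ℝ) < t := by linarith
    simp only [smul_eq_mul]
    field_simp
    ring
  rw [heq] at this
  have : (s/t) * φ t ≤ φ s := by
    simpa [hz, smul_eq_mul] using this
  have htpos : (0:ℝ) < t := by linarith
  calc s * φ t = t * ((s/t) * φ t) := by field_simp
    _ ≤ t * φ s := by nlinarith

lemma aux_geom {ι : Type*} (q : ℝ) (h0 : 0 ≤ q) (h1 : q < 1) (t : Finset ι) (e : ι → ℕ)
    (he : Set.InjOn e t) : ∑ j ∈ t, q ^ (e j) ≤ (1 - q)⁻¹ := by
  rw [← Finset.sum_image (fun a ha b hb => he ha hb)]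
  calc ∑ d ∈ t.image e, q ^ d ≤ ∑' d : ℕ, q ^ d := by
        apply Summable.sum_le_tsum _ (fun i _ => by positivity)
        exact summable_geometric_of_lt_one h0 h1
    _ = (1 - q)⁻¹ := tsum_geometric_of_lt_one h0 h1

lemma aux_geom_one {ι : Type*} (q : ℝ) (h0 : 0 ≤ q) (h1 : q < 1) (t : Finset ι) (e : ι → ℕ)
    (he : Set.InjOn e t) (hge : ∀ j ∈ t, 1 ≤ e j) :
    ∑ j ∈ t, q ^ (e j) ≤ q * (1 - q)⁻¹ := by
  have : ∀ j ∈ t, q ^ (e j) = q * q ^ (e j - 1) := by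
    intro j hj
    rw [← pow_succ']
    congr 1
    have := hge j hj
    omega
  rw [Finset.sum_congr rfl this, ← Finset.mul_sum]
  have hinj : Set.InjOn (fun j => e j - 1) t := by
    intro x hx y hy hxy
    apply he hx hy
    have := hge x hx; have := hge y hy
    simp only at hxy
    omega
  exact mul_le_mul_of_nonneg_left (aux_geom q h0 h1 t _ hinj) h0

lemma step_lemma (φ : ℝ → ℝ)
    (hφslope : Tendsto (fun t => φ t / t) (𝓝[>] 0) atTop)
    (q : ℝ) (hq : 0 < q) (r : ℝ) (hr : 0 < r) :
    ∀ x : ℝ, 0 < x → ∃ s : ℝ, 0 < s ∧ s ≤ r * x ∧ φ x / x ≤ q * (φ s / s) := by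
  intro x hx
  have h1 : ∀ᶠ s in 𝓝[>] (0:ℝ), φ x / x / q ≤ φ s / s :=
    hφslope.eventually (eventually_ge_atTop _)
  have h2 : ∀ᶠ s in 𝓝[>] (0:ℝ), s ≤ r * x := by
    filter_upwards [Ioo_mem_nhdsGT (by positivity : (0:ℝ) < r * x)] with s hs
    exact hs.2.le
  have h3 : ∀ᶠ s in 𝓝[>] (0:ℝ), 0 < s := eventually_mem_nhdsWithin
  obtain ⟨s, hs1, hs2, hs3⟩ := (h1.and (h2.and h3)).exists
  exact ⟨s, hs3, hs2, by rw [div_le_iff₀ hq] at hs1; linarith [hs1]⟩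

lemma exists_scales (φ : ℝ → ℝ)
    (hφslope : Tendsto (fun t => φ t / t) (𝓝[>] 0) atTop)
    (p q : ℝ) (hp : 0 < p) (hq : 0 < q) (hq2 : q ≤ 1/2)
    (c : ℝ) (hc : 0 < c) (hc1 : c < 1) :
    ∃ t : ℕ → ℝ, (∀ k, 0 < t k) ∧ (∀ k, t k ≤ min p 4⁻¹) ∧
      (∀ k, t (k+1) ≤ 2⁻¹ * t k) ∧
      (∀ k, (t (k+1)) ^ c ≤ q * (t k) ^ c) ∧
      (∀ k, φ (t k) / t k ≤ q * (φ (t (k+1)) / (t (k+1)))) := by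
  set r : ℝ := q ^ (1/c) with hrdef
  have hr : 0 < r := Real.rpow_pos_of_pos hq _
  have hrq : r ≤ q := by
    rw [hrdef]
    calc q ^ (1/c) ≤ q ^ (1:ℝ) :=
          Real.rpow_le_rpow_of_exponent_ge hq (by linarith) (one_le_one_div hc hc1.le)
      _ = q := Real.rpow_one q
  have key : ∀ x : ℝ, ∃ s : ℝ, 0 < x → (0 < s ∧ s ≤ r * x ∧ φ x / x ≤ q * (φ s / s)) := by
    intro x
    by_cases h : 0 < x
    · obtain ⟨s, h1, h2, h3⟩ := step_lemma φ hφslope q hq r hr x h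
      exact ⟨s, fun _ => ⟨h1, h2, h3⟩⟩
    · exact ⟨1, fun h' => absurd h' h⟩
  choose F hF using key
  set x0 : ℝ := min p 4⁻¹ with hx0def
  have hx0 : 0 < x0 := lt_min hp (by norm_num)
  set t : ℕ → ℝ := fun k => F^[k] (F x0) with htdef
  have hrx : ∀ x : ℝ, 0 < x → r * x ≤ x := by
    intro x hx
    nlinarith [hrq, hq2, hx]
  have hbase : ∀ k, 0 < t k ∧ t k ≤ x0 := by
    intro k
    induction k with
    | zero =>
      have h := hF x0 hx0
      exact ⟨h.1, h.2.1.trans (hrx x0 hx0)⟩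
    | succ n ih =>
      have hs : t (n+1) = F (t n) := Function.iterate_succ_apply' F n (F x0)
      have h := hF (t n) ih.1
      rw [hs]
      exact ⟨h.1, (h.2.1.trans (hrx _ ih.1)).trans ih.2⟩
  have hsucc : ∀ k, t (k+1) = F (t k) := fun k => Function.iterate_succ_apply' F k (F x0)
  refine ⟨t, fun k => (hbase k).1, fun k => (hbase k).2, ?_, ?_, ?_⟩
  · intro k
    have h := (hF (t k) (hbase k).1).2.1
    rw [hsucc k] at *
    nlinarith [(hbase k).1, hrq, hq2]
  · intro k
    rw [hsucc k]
    have h1 : (F (t k)) ^ c ≤ (r * t k) ^ c :=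
      Real.rpow_le_rpow (hF (t k) (hbase k).1).1.le (hF (t k) (hbase k).1).2.1 hc.le
    have h2 : (r * t k) ^ c = q * (t k) ^ c := by
      rw [Real.mul_rpow hr.le (hbase k).1.le, hrdef, ← Real.rpow_mul hq.le]
      rw [one_div, inv_mul_cancel₀ (ne_of_gt hc), Real.rpow_one]
    linarith [h1, h2.le, h2.ge]
  · intro k
    have h := (hF (t k) (hbase k).1).2.2
    rw [hsucc k]
    exact h

lemma aux_tel_slope (φ : ℝ → ℝ) (q : ℝ) (hq : 0 ≤ q) (t : ℕ → ℝ)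
    (h : ∀ k, φ (t k) / t k ≤ q * (φ (t (k+1)) / t (k+1))) :
    ∀ i d : ℕ, φ (t i) / t i ≤ q ^ d * (φ (t (i+d)) / t (i+d)) := by
  intro i d
  induction d with
  | zero => simp
  | succ n ih =>
    calc φ (t i) / t i ≤ q ^ n * (φ (t (i+n)) / t (i+n)) := ih
      _ ≤ q ^ n * (q * (φ (t (i+n+1)) / t (i+n+1))) :=
          mul_le_mul_of_nonneg_left (h (i+n)) (by positivity)
      _ = q ^ (n+1) * (φ (t (i+(n+1))) / t (i+(n+1))) := by ring_nf

lemma aux_tel_c (c q : ℝ) (hq : 0 ≤ q) (t : ℕ → ℝ)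
    (h : ∀ k, (t (k+1)) ^ c ≤ q * (t k) ^ c) :
    ∀ i d : ℕ, (t (i+d)) ^ c ≤ q ^ d * (t i) ^ c := by
  intro i d
  induction d with
  | zero => simp
  | succ n ih =>
    calc (t (i+(n+1))) ^ c ≤ q * (t (i+n)) ^ c := h (i+n)
      _ ≤ q * (q ^ n * (t i) ^ c) := mul_le_mul_of_nonneg_left ih hq
      _ = q ^ (n+1) * (t i) ^ c := by ring

lemma aux_psi_half (ψ : ℝ → ℝ) (hconc : ConcaveOn ℝ (Set.Ici 0) ψ) (hz : ψ 0 = 0)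
    (x : ℝ) (hx : 0 ≤ x) : ψ x / 2 ≤ ψ (x / 2) := by
  have := hconc.2 (Set.self_mem_Ici) (show x ∈ Set.Ici (0:ℝ) from hx)
    (by norm_num : (0:ℝ) ≤ (2:ℝ)⁻¹) (by norm_num : (0:ℝ) ≤ (2:ℝ)⁻¹) (by norm_num)
  simp only [smul_eq_mul, mul_zero, hz, zero_add] at this
  rw [show x/2 = 2⁻¹ * x by ring]
  linarith [this]

end Aux

set_option maxHeartbeats 4000000 in
/-- under assumptions (φ(0⁺)=0, φ(t)/t → ∞, `φ(t)/t^c` non-decreasing near 0,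
`ψ(n²) ≤ C ψ(n)`), for every `N ≥ 2` there are pairwise disjoint measurable sets
`A₁,…,A_{2N} ⊆ [0,1]` of positive measure such that `f = ∑ⱼ aⱼ χ_{Aⱼ}` with
`aⱼ = 1/(2N φ(λ(Aⱼ)))` satisfies `‖f‖_{φ,ψ} ≥ (2^c - 1)/8 · ψ(N)`. -/
theorem stmt16 {φ ψ : ℝ → ℝ} (hφ : IsPhi φ) (hψ : IsPsi ψ)
    (hφ0 : Tendsto φ (𝓝[>] 0) (𝓝 0))
    (hφslope : Tendsto (fun t => φ t / t) (𝓝[>] 0) atTop)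
    (c p : ℝ) (hc : 0 < c) (hc1 : c < 1) (hp : 0 < p) (hp1 : p ≤ 1)
    (hreg : MonotoneOn (fun t => φ t / t ^ c) (Set.Ioc 0 p))
    (C : ℝ) (hC : 1 ≤ C) (hψC : ∀ n : ℕ, 1 ≤ n → ψ ((n : ℝ) ^ 2) ≤ C * ψ (n : ℝ)) :
    ∀ N : ℕ, 2 ≤ N → ∃ A : Fin (2 * N) → Set ℝ,
      (∀ j, MeasurableSet (A j)) ∧ (∀ j, A j ⊆ Set.Icc (0:ℝ) 1) ∧
      (∀ j, 0 < μ01 (A j)) ∧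
      (∀ i j, i ≠ j → Disjoint (A i) (A j)) ∧
      ENNReal.ofReal (((2:ℝ) ^ c - 1) / 8 * ψ (N : ℝ)) ≤
        QANorm φ ψ (fun x => ∑ j : Fin (2 * N),
          (1 / (2 * (N : ℝ) * φ ((μ01 (A j)).toReal))) *
            (A j).indicator (fun _ => (1:ℝ)) x) := by
  classical
  intro N hN
  have hNR : (2:ℝ) ≤ (N:ℝ) := by exact_mod_cast hN
  have hNpos : (0:ℝ) < N := by linarith
  have h2c1 : (1:ℝ) < (2:ℝ) ^ c := by
    rw [show (1:ℝ) = (2:ℝ) ^ (0:ℝ) by rw [Real.rpow_zero]]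
    exact Real.rpow_lt_rpow_of_exponent_lt one_lt_two hc
  have h2c2 : (2:ℝ) ^ c < 2 := by
    calc (2:ℝ) ^ c < 2 ^ (1:ℝ) := Real.rpow_lt_rpow_of_exponent_lt one_lt_two hc1
      _ = 2 := Real.rpow_one 2
  have hψ1 : 0 < ψ 1 := hψ.pos 1 one_pos
  have hψN : 0 < ψ (N:ℝ) := hψ.pos _ hNpos
  set D : ℝ := ((2:ℝ) ^ c - 1) / 8 * ψ (N:ℝ) with hDdef
  have hD : 0 < D := by
    apply mul_pos _ hψN
    apply div_pos (by linarith) (by norm_num)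
  set q : ℝ := min (1/2) (min (2 - (2:ℝ)^c) (ψ 1 / (((2:ℝ)^c - 1) * ψ (N:ℝ)))) with hqdef
  have hq0 : 0 < q := by
    apply lt_min (by norm_num)
    apply lt_min (by linarith)
    apply div_pos hψ1
    apply mul_pos (by linarith) hψN
  have hq2 : q ≤ 1/2 := min_le_left _ _
  have hq3 : q ≤ 2 - (2:ℝ)^c := (min_le_right _ _).trans (min_le_left _ _)
  have hq4 : q ≤ ψ 1 / (((2:ℝ)^c - 1) * ψ (N:ℝ)) := (min_le_right _ _).trans (min_le_right _ _)
  have hq1 : q < 1 := by linarith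
  obtain ⟨t, tpos, tle, thalf, tc, tslope⟩ := exists_scales φ hφslope p q hp hq0 hq2 c hc hc1
  have tle1 : ∀ k, t k ≤ 1 := fun k => (tle k).trans ((min_le_right _ _).trans (by norm_num))
  have tlep : ∀ k, t k ≤ p := fun k => (tle k).trans (min_le_left _ _)
  have tle4 : ∀ k, t k ≤ 4⁻¹ := fun k => (tle k).trans (min_le_right _ _)
  have tmono : ∀ i j : ℕ, i ≤ j → t j ≤ t i := by
    have : ∀ k, t (k+1) ≤ t k := fun k => (thalf k).trans (by linarith [tpos k])
    intro i j hij
    exact antitone_nat_of_succ_le this hij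
  have tgeo : ∀ k, t k ≤ 4⁻¹ * (2⁻¹) ^ k := by
    intro k
    induction k with
    | zero => simpa using tle4 0
    | succ n ih =>
      calc t (n+1) ≤ 2⁻¹ * t n := thalf n
        _ ≤ 2⁻¹ * (4⁻¹ * (2⁻¹)^n) := by linarith [ih, tpos n]
        _ = 4⁻¹ * (2⁻¹)^(n+1) := by ring
  have tsum : ∀ J : ℕ, ∑ i ∈ Finset.range J, t i ≤ 2⁻¹ := by
    intro J
    calc ∑ i ∈ Finset.range J, t i ≤ ∑ i ∈ Finset.range J, 4⁻¹ * (2⁻¹:ℝ)^i :=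
          Finset.sum_le_sum (fun i _ => tgeo i)
      _ = 4⁻¹ * ∑ i ∈ Finset.range J, (2⁻¹:ℝ)^i := by rw [Finset.mul_sum]
      _ ≤ 4⁻¹ * (1 - 2⁻¹)⁻¹ := by
          apply mul_le_mul_of_nonneg_left _ (by norm_num)
          exact aux_geom (2⁻¹ : ℝ) (by norm_num) (by norm_num) (Finset.range J) id
            (fun a _ b _ h => h)
      _ ≤ 2⁻¹ := by norm_num
  set b : ℕ → ℝ := fun j => ∑ i ∈ Finset.range j, t i with hbdef
  have hb0 : ∀ j, 0 ≤ b j := fun j => Finset.sum_nonneg (fun i _ => (tpos i).le)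
  have hbsucc : ∀ j, b j + t j = b (j+1) := fun j => (Finset.sum_range_succ t j).symm
  have hbsum : ∀ j, b j + t j ≤ 2⁻¹ := fun j => (hbsucc j).le.trans (tsum (j+1))
  have hbmono : ∀ i j : ℕ, i ≤ j → b i ≤ b j := by
    intro i j hij
    apply Finset.sum_le_sum_of_subset_of_nonneg (Finset.range_subset_range.2 hij)
    exact fun k _ _ => (tpos k).le
  set A : Fin (2*N) → Set ℝ := fun j => Set.Ico (b j.val) (b j.val + t j.val) with hAdef
  have hmeas : ∀ j, MeasurableSet (A j) := fun j => measurableSet_Ico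
  have hsub : ∀ j, A j ⊆ Set.Icc (0:ℝ) 1 := by
    intro j x hx
    obtain ⟨h1, h2⟩ := hx
    constructor
    · linarith [hb0 j.val]
    · linarith [hbsum j.val]
  have hμA : ∀ j, μ01 (A j) = ENNReal.ofReal (t j.val) := by
    intro j
    rw [μ01, Measure.restrict_apply' measurableSet_Icc,
      Set.inter_eq_self_of_subset_left (hsub j), hAdef]
    simp only [Real.volume_Ico]
    ring_nf
  have hposA : ∀ j, 0 < μ01 (A j) := by
    intro j
    rw [hμA j]
    exact ENNReal.ofReal_pos.2 (tpos j.val)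
  have hdisj : ∀ i j : Fin (2*N), i ≠ j → Disjoint (A i) (A j) := by
    have key : ∀ i j : Fin (2*N), i.val < j.val → Disjoint (A i) (A j) := by
      intro i j hij
      apply Set.Ico_disjoint_Ico.2
      have h1 : b i.val + t i.val ≤ b j.val := by
        rw [hbsucc i.val]
        exact hbmono _ _ hij
      calc min (b i.val + t i.val) (b j.val + t j.val) ≤ b i.val + t i.val := min_le_left _ _
        _ ≤ b j.val := h1
        _ ≤ max (b i.val) (b j.val) := le_max_right _ _
    intro i j hij
    rcases lt_or_gt_of_ne (fun h => hij (Fin.ext h)) with h | h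
    · exact key i j h
    · exact (key j i h).symm
  refine ⟨A, hmeas, hsub, hposA, hdisj, ?_⟩
  set a : ℕ → ℝ := fun k => 1 / (2 * (N:ℝ) * φ (t k)) with hadef
  have hφt : ∀ k, 0 < φ (t k) := fun k => hφ.pos _ (tpos k) (tle1 k)
  have hφnn : ∀ x : ℝ, 0 ≤ x → x ≤ 1 → 0 ≤ φ x := by
    intro x h0 h1
    rw [← hφ.zero]
    exact hφ.mono ⟨le_refl 0, by norm_num⟩ ⟨h0, h1⟩ h0
  have ha : ∀ k, 0 < a k := by
    intro k
    apply div_pos one_pos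
    have := hφt k
    positivity
  have hcoeff : ∀ j : Fin (2*N), (1 / (2 * (N:ℝ) * φ ((μ01 (A j)).toReal))) = a j.val := by
    intro j
    rw [hμA j, ENNReal.toReal_ofReal (tpos j.val).le]
  set f : ℝ → ℝ := fun x => ∑ j : Fin (2*N),
      (1 / (2 * (N:ℝ) * φ ((μ01 (A j)).toReal))) * (A j).indicator (fun _ => (1:ℝ)) x
    with hfdef
  have hflb : ∀ j : Fin (2*N), ∀ x ∈ A j, a j.val ≤ |f x| := by
    intro j x hx
    have hterm : ∀ i : Fin (2*N), 0 ≤ (1 / (2 * (N:ℝ) * φ ((μ01 (A i)).toReal))) *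
        (A i).indicator (fun _ => (1:ℝ)) x := by
      intro i
      apply mul_nonneg
      · rw [hcoeff i]; exact (ha i.val).le
      · exact Set.indicator_nonneg (fun _ _ => zero_le_one) x
    have hfnn : 0 ≤ f x := Finset.sum_nonneg (fun i _ => hterm i)
    rw [abs_of_nonneg hfnn]
    have hj : (1 / (2 * (N:ℝ) * φ ((μ01 (A j)).toReal))) *
        (A j).indicator (fun _ => (1:ℝ)) x = a j.val := by
      rw [Set.indicator_of_mem hx, hcoeff j, mul_one]
    calc a j.val = _ := hj.symm
      _ ≤ f x := Finset.single_le_sum (fun i _ => hterm i) (Finset.mem_univ j)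
  rw [QANorm]
  refine le_iInf fun g => le_iInf fun hg => ?_
  obtain ⟨hgm, hgb, hgnn, hgdom⟩ := hg
  set H : ℕ → ℝ≥0∞ := fun n => eLpNorm (g n) ⊤ μ01 with hHdef
  set L : ℕ → ℝ≥0∞ := fun n => eLpNorm (g n) 1 μ01 with hLdef
  set rr : ℕ → ℝ := fun n => (L n / H n).toReal with hrrdef
  set hh : ℕ → ℝ := fun n => (H n).toReal with hhhdef
  set u : ℕ → ℝ := fun n => hh n * φ (rr n) with hudef
  have hHne : ∀ n, H n ≠ ⊤ := fun n => (hgb n).ne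
  have hLH : ∀ n, L n ≤ H n := fun n => aux_L1_le_H (g n) (hgnn n)
  have hLne : ∀ n, L n ≠ ⊤ := fun n => ((hLH n).trans_lt (hgb n)).ne
  have hr0 : ∀ n, 0 ≤ rr n := fun n => ENNReal.toReal_nonneg
  have hr1 : ∀ n, rr n ≤ 1 := by
    intro n
    have : L n / H n ≤ 1 := ENNReal.div_le_of_le_mul (by simpa using hLH n)
    calc rr n ≤ (1 : ℝ≥0∞).toReal := ENNReal.toReal_mono one_ne_top this
      _ = 1 := by simp
  have hh0 : ∀ n, 0 ≤ hh n := fun n => ENNReal.toReal_nonneg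
  have hu0 : ∀ n, 0 ≤ u n := fun n => mul_nonneg (hh0 n) (hφnn _ (hr0 n) (hr1 n))
  have hLval : ∀ n, L n = ENNReal.ofReal (hh n * rr n) := by
    intro n
    by_cases h : H n = 0
    · have hL0 : L n = 0 := le_antisymm (by rw [← h]; exact hLH n) zero_le
      rw [hL0, hhhdef]
      simp [h]
    · have hcan : H n * (L n / H n) = L n := ENNReal.mul_div_cancel h (hHne n)
      have hfin : L n / H n ≠ ⊤ := by
        intro htop
        rw [ENNReal.div_eq_top] at htop
        rcases htop with ⟨_, h2⟩ | ⟨h2, _⟩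
        · exact h h2
        · exact hLne n h2
      calc L n = H n * (L n / H n) := hcan.symm
        _ = ENNReal.ofReal (hh n) * ENNReal.ofReal (rr n) := by
            simp only [hhhdef, hrrdef]
            rw [ENNReal.ofReal_toReal (hHne n), ENNReal.ofReal_toReal hfin]
        _ = ENNReal.ofReal (hh n * rr n) := (ENNReal.ofReal_mul (hh0 n)).symm
  have jex : ∀ n, 0 < rr n → ∃ k, t k ≤ min (rr n) p := by
    intro n h
    have hε : 0 < min (rr n) p := lt_min h hp
    obtain ⟨k, hk⟩ := exists_pow_lt_of_lt_one hε (by norm_num : (2⁻¹:ℝ) < 1)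
    refine ⟨k, (tgeo k).trans ?_⟩
    have h1 : (0:ℝ) ≤ (2⁻¹:ℝ)^k := by positivity
    nlinarith [hk]
  obtain ⟨jn, hjn⟩ : ∃ jn : ℕ → ℕ, ∀ n, 0 < rr n →
      (t (jn n) ≤ min (rr n) p ∧ ∀ k, k < jn n → min (rr n) p < t k) := by
    refine ⟨fun n => if h : 0 < rr n then Nat.find (jex n h) else 0, ?_⟩
    intro n h
    simp only [dif_pos h]
    exact ⟨Nat.find_spec (jex n h), fun k hk => lt_of_not_ge (Nat.find_min (jex n h) hk)⟩
  set e : ℕ → ℕ → ℕ := fun n j => if j < jn n then jn n - 1 - j else j - jn n with hedef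
  have hscale : ∀ j : Fin (2*N), ENNReal.ofReal (a j.val * t j.val) ≤
      ∑' n, ∫⁻ x in A j, ENNReal.ofReal (g n x) ∂μ01 := by
    intro j
    calc ENNReal.ofReal (a j.val * t j.val)
        = ENNReal.ofReal (a j.val) * μ01 (A j) := by
          rw [hμA j, ← ENNReal.ofReal_mul (ha j.val).le]
      _ = ∫⁻ _ in A j, ENNReal.ofReal (a j.val) ∂μ01 := (setLIntegral_const _ _).symm
      _ ≤ ∫⁻ x in A j, ENNReal.ofReal |f x| ∂μ01 := by
          apply lintegral_mono_ae
          rw [ae_restrict_iff' (hmeas j)]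
          exact ae_of_all _ (fun x hx => ENNReal.ofReal_le_ofReal (hflb j x hx))
      _ ≤ ∫⁻ x in A j, ∑' n, ENNReal.ofReal (g n x) ∂μ01 :=
          lintegral_mono_ae (ae_restrict_of_ae hgdom)
      _ = ∑' n, ∫⁻ x in A j, ENNReal.ofReal (g n x) ∂μ01 :=
          lintegral_tsum (fun n => ((hgm n).ennreal_ofReal).restrict)
  have hKEY : ∀ n, ∀ j : Fin (2*N), ∫⁻ x in A j, ENNReal.ofReal (g n x) ∂μ01 ≤
      ENNReal.ofReal (u n * q ^ (e n j.val) * (t j.val / φ (t j.val))) := by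
    intro n j
    by_cases hrn : 0 < rr n
    · have hρpos : 0 < min (rr n) p := lt_min hrn hp
      by_cases hj : j.val < jn n
      · -- coarse scales: use the L¹ bound
        have hjn1 : 1 ≤ jn n := by omega
        have hJlt : jn n - 1 < jn n := by omega
        have hρJ : min (rr n) p < t (jn n - 1) := (hjn n hrn).2 _ hJlt
        have hrp : rr n < p := by
          by_contra hge
          push_neg at hge
          rw [min_eq_right hge] at hρJ
          exact absurd (tlep (jn n - 1)) (not_le.2 hρJ)
        have hrtJ : rr n < t (jn n - 1) := by
          rw [min_eq_left hrp.le] at hρJ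
          exact hρJ
        have hd : j.val + (jn n - 1 - j.val) = jn n - 1 := by omega
        have hS1 : φ (t j.val) / t j.val ≤
            q ^ (jn n - 1 - j.val) * (φ (t (jn n - 1)) / t (jn n - 1)) := by
          have := aux_tel_slope φ q hq0.le t tslope j.val (jn n - 1 - j.val)
          rwa [hd] at this
        have hS2 : φ (t (jn n - 1)) / t (jn n - 1) ≤ φ (rr n) / rr n := by
          have h := aux_slope φ hφ.concave hφ.zero (rr n) (t (jn n - 1)) hrn hrtJ.le
            (tle1 (jn n - 1))
          rw [div_le_div_iff₀ (tpos (jn n - 1)) hrn]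
          nlinarith [h]
        have he' : e n j.val = jn n - 1 - j.val := by
          simp only [hedef, if_pos hj]
        have hS : φ (t j.val) / t j.val ≤ q ^ (e n j.val) * (φ (rr n) / rr n) := by
          rw [he']
          calc φ (t j.val) / t j.val
              ≤ q ^ (jn n - 1 - j.val) * (φ (t (jn n - 1)) / t (jn n - 1)) := hS1
            _ ≤ q ^ (jn n - 1 - j.val) * (φ (rr n) / rr n) :=
                mul_le_mul_of_nonneg_left hS2 (by positivity)
        have h1 : rr n * (φ (t j.val) / t j.val) ≤ q ^ (e n j.val) * φ (rr n) := by
          have hm := mul_le_mul_of_nonneg_left hS (hr0 n)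
          calc rr n * (φ (t j.val) / t j.val)
              ≤ rr n * (q ^ (e n j.val) * (φ (rr n) / rr n)) := hm
            _ = q ^ (e n j.val) * φ (rr n) := by field_simp
        have h2 : rr n ≤ q ^ (e n j.val) * φ (rr n) * (t j.val / φ (t j.val)) := by
          have hdiv : (0:ℝ) ≤ t j.val / φ (t j.val) :=
            (div_pos (tpos j.val) (hφt j.val)).le
          have hmul := mul_le_mul_of_nonneg_right h1 hdiv
          have hone : (φ (t j.val) / t j.val) * (t j.val / φ (t j.val)) = 1 := by
            rw [div_mul_div_comm, mul_comm (φ (t j.val)) (t j.val)]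
            exact div_self (ne_of_gt (mul_pos (tpos j.val) (hφt j.val)))
          calc rr n = rr n * (φ (t j.val) / t j.val) * (t j.val / φ (t j.val)) := by
                rw [mul_assoc, hone, mul_one]
            _ ≤ q ^ (e n j.val) * φ (rr n) * (t j.val / φ (t j.val)) := hmul
        have hsc : hh n * rr n ≤ u n * q ^ (e n j.val) * (t j.val / φ (t j.val)) := by
          have := mul_le_mul_of_nonneg_left h2 (hh0 n)
          calc hh n * rr n
              ≤ hh n * (q ^ (e n j.val) * φ (rr n) * (t j.val / φ (t j.val))) := this
            _ = u n * q ^ (e n j.val) * (t j.val / φ (t j.val)) := by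
                simp only [hudef]; ring
        calc ∫⁻ x in A j, ENNReal.ofReal (g n x) ∂μ01 ≤ L n :=
              aux_W_le_L1 (g n) (hgnn n) (A j)
          _ = ENNReal.ofReal (hh n * rr n) := hLval n
          _ ≤ _ := ENNReal.ofReal_le_ofReal hsc
      · -- fine scales: use the L^∞ bound
        push_neg at hj
        have htjρ : t j.val ≤ min (rr n) p := (tmono (jn n) j.val hj).trans (hjn n hrn).1
        have he' : e n j.val = j.val - jn n := by
          simp only [hedef, if_neg (not_lt.2 hj)]
        have htc : (0:ℝ) < (t j.val) ^ c := Real.rpow_pos_of_pos (tpos j.val) c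
        have hρc : (0:ℝ) < (min (rr n) p) ^ c := Real.rpow_pos_of_pos hρpos c
        have hregapp : φ (t j.val) / (t j.val) ^ c ≤
            φ (min (rr n) p) / (min (rr n) p) ^ c :=
          hreg ⟨tpos j.val, tlep j.val⟩ ⟨hρpos, min_le_right _ _⟩ htjρ
        have hregapp' : φ (t j.val) * (min (rr n) p) ^ c ≤
            φ (min (rr n) p) * (t j.val) ^ c := by
          rw [div_le_div_iff₀ htc hρc] at hregapp
          linarith [hregapp]
        have hc1' : φ (t j.val) ≤ φ (min (rr n) p) * ((t j.val) ^ c / (min (rr n) p) ^ c) := by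
          rw [← mul_div_assoc, le_div_iff₀ hρc]
          linarith [hregapp']
        have htel : (t j.val) ^ c ≤ q ^ (j.val - jn n) * (t (jn n)) ^ c := by
          have := aux_tel_c c q hq0.le t tc (jn n) (j.val - jn n)
          rwa [Nat.add_sub_cancel' hj] at this
        have hρtc : (t (jn n)) ^ c ≤ (min (rr n) p) ^ c :=
          Real.rpow_le_rpow (tpos _).le (hjn n hrn).1 hc.le
        have hfrac : (t j.val) ^ c / (min (rr n) p) ^ c ≤ q ^ (j.val - jn n) := by
          rw [div_le_iff₀ hρc]
          calc (t j.val) ^ c ≤ q ^ (j.val - jn n) * (t (jn n)) ^ c := htel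
            _ ≤ q ^ (j.val - jn n) * (min (rr n) p) ^ c :=
                mul_le_mul_of_nonneg_left hρtc (by positivity)
        have hρ1 : min (rr n) p ≤ 1 := (min_le_right _ _).trans hp1
        have hφρr : φ (min (rr n) p) ≤ φ (rr n) :=
          hφ.mono ⟨hρpos.le, hρ1⟩ ⟨hr0 n, hr1 n⟩ (min_le_left _ _)
        have hφρ0 : 0 ≤ φ (min (rr n) p) := hφnn _ hρpos.le hρ1
        have hkey2 : φ (t j.val) ≤ q ^ (e n j.val) * φ (rr n) := by
          rw [he']
          calc φ (t j.val) ≤ φ (min (rr n) p) * ((t j.val) ^ c / (min (rr n) p) ^ c) := hc1'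
            _ ≤ φ (min (rr n) p) * q ^ (j.val - jn n) :=
                mul_le_mul_of_nonneg_left hfrac hφρ0
            _ ≤ φ (rr n) * q ^ (j.val - jn n) :=
                mul_le_mul_of_nonneg_right hφρr (by positivity)
            _ = q ^ (j.val - jn n) * φ (rr n) := mul_comm _ _
        have h2 : t j.val ≤ q ^ (e n j.val) * φ (rr n) * (t j.val / φ (t j.val)) := by
          have hdiv : (0:ℝ) ≤ t j.val / φ (t j.val) :=
            (div_pos (tpos j.val) (hφt j.val)).le
          have hmul := mul_le_mul_of_nonneg_right hkey2 hdiv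
          have hone : φ (t j.val) * (t j.val / φ (t j.val)) = t j.val := by
            rw [mul_div_assoc', mul_comm (φ (t j.val)) (t j.val)]
            exact mul_div_cancel_right₀ _ (ne_of_gt (hφt j.val))
          calc t j.val = φ (t j.val) * (t j.val / φ (t j.val)) := hone.symm
            _ ≤ q ^ (e n j.val) * φ (rr n) * (t j.val / φ (t j.val)) := hmul
        have hsc : hh n * t j.val ≤ u n * q ^ (e n j.val) * (t j.val / φ (t j.val)) := by
          have := mul_le_mul_of_nonneg_left h2 (hh0 n)
          calc hh n * t j.val
              ≤ hh n * (q ^ (e n j.val) * φ (rr n) * (t j.val / φ (t j.val))) := this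
            _ = u n * q ^ (e n j.val) * (t j.val / φ (t j.val)) := by
                simp only [hudef]; ring
        calc ∫⁻ x in A j, ENNReal.ofReal (g n x) ∂μ01 ≤ H n * μ01 (A j) :=
              aux_W_le_H (g n) (hgnn n) (A j)
          _ = ENNReal.ofReal (hh n * t j.val) := by
              rw [hμA j, ← ENNReal.ofReal_toReal (hHne n), ← ENNReal.ofReal_mul (hh0 n)]
          _ ≤ _ := ENNReal.ofReal_le_ofReal hsc
    · have hr00 : rr n = 0 := le_antisymm (not_lt.1 hrn) (hr0 n)
      calc ∫⁻ x in A j, ENNReal.ofReal (g n x) ∂μ01 ≤ L n :=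
            aux_W_le_L1 (g n) (hgnn n) (A j)
        _ = ENNReal.ofReal (hh n * rr n) := hLval n
        _ = 0 := by rw [hr00, mul_zero, ENNReal.ofReal_zero]
        _ ≤ _ := zero_le
  set m : ℕ := N / 2 with hmdef
  set Bad : Finset ℕ := (Finset.range m).biUnion (fun n => {jn n - 1, jn n}) with hBaddef
  set Good : Finset (Fin (2*N)) := Finset.univ.filter (fun j => j.val ∉ Bad) with hGooddef
  have hBadcard : Bad.card ≤ 2 * m := by
    calc Bad.card ≤ ∑ n ∈ Finset.range m, ({jn n - 1, jn n} : Finset ℕ).card :=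
          Finset.card_biUnion_le
      _ ≤ ∑ _n ∈ Finset.range m, 2 :=
          Finset.sum_le_sum (fun i _ => (Finset.card_insert_le _ _).trans (by simp))
      _ = 2 * m := by rw [Finset.sum_const, Finset.card_range, smul_eq_mul, mul_comm]
  have h2m : 2 * m ≤ N := by omega
  have hGoodcard : N ≤ Good.card := by
    have hinj : (Finset.univ.filter (fun j : Fin (2*N) => j.val ∈ Bad)).card ≤ Bad.card := by
      apply Finset.card_le_card_of_injOn (fun j => j.val)
      · intro j hj
        simp only [Finset.coe_filter, Finset.mem_univ, true_and, Set.mem_setOf_eq] at hj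
        exact hj
      · intro x _ y _ hxy
        exact Fin.ext hxy
    have hsplit := Finset.card_filter_add_card_filter_not
      (s := (Finset.univ : Finset (Fin (2*N)))) (p := fun j => j.val ∈ Bad)
    have huniv : (Finset.univ : Finset (Fin (2*N))).card = 2*N := by
      rw [Finset.card_univ, Fintype.card_fin]
    rw [hGooddef]
    omega
  have hGoodBad : ∀ j ∈ Good, ∀ n, n < m → j.val ≠ jn n - 1 ∧ j.val ≠ jn n := by
    intro j hj n hn
    rw [hGooddef, Finset.mem_filter] at hj
    constructor
    · intro hEq
      apply hj.2
      rw [hBaddef]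
      exact Finset.mem_biUnion.2 ⟨n, Finset.mem_range.2 hn, by simp [hEq]⟩
    · intro hEq
      apply hj.2
      rw [hBaddef]
      exact Finset.mem_biUnion.2 ⟨n, Finset.mem_range.2 hn, by simp [hEq]⟩
  have hcap_all : ∀ n, ∑ j ∈ Good, q ^ (e n j.val) ≤ 2 * (1 - q)⁻¹ := by
    intro n
    rw [← Finset.sum_filter_add_sum_filter_not Good (fun j => j.val < jn n)]
    have h1 : ∑ j ∈ Good.filter (fun j => j.val < jn n), q ^ (e n j.val) ≤ (1-q)⁻¹ := by
      apply aux_geom q hq0.le hq1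
      intro x hx y hy hxy
      simp only [Finset.coe_filter, Set.mem_setOf_eq] at hx hy
      simp only [] at hxy
      have hex : e n x.val = jn n - 1 - x.val := by simp only [hedef, if_pos hx.2]
      have hey : e n y.val = jn n - 1 - y.val := by simp only [hedef, if_pos hy.2]
      rw [hex, hey] at hxy
      have hx2 := hx.2; have hy2 := hy.2
      apply Fin.ext
      omega
    have h2 : ∑ j ∈ Good.filter (fun j => ¬ j.val < jn n), q ^ (e n j.val) ≤ (1-q)⁻¹ := by
      apply aux_geom q hq0.le hq1
      intro x hx y hy hxy
      simp only [Finset.coe_filter, Set.mem_setOf_eq] at hx hy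
      simp only [] at hxy
      have hex : e n x.val = x.val - jn n := by simp only [hedef, if_neg hx.2]
      have hey : e n y.val = y.val - jn n := by simp only [hedef, if_neg hy.2]
      rw [hex, hey] at hxy
      have hx2 := hx.2; have hy2 := hy.2
      apply Fin.ext
      omega
    linarith
  have hcap_cheap : ∀ n, n < m → ∑ j ∈ Good, q ^ (e n j.val) ≤ 2 * (q * (1 - q)⁻¹) := by
    intro n hn
    rw [← Finset.sum_filter_add_sum_filter_not Good (fun j => j.val < jn n)]
    have h1 : ∑ j ∈ Good.filter (fun j => j.val < jn n), q ^ (e n j.val) ≤ q * (1-q)⁻¹ := by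
      apply aux_geom_one q hq0.le hq1
      · intro x hx y hy hxy
        simp only [Finset.coe_filter, Set.mem_setOf_eq] at hx hy
        simp only [] at hxy
        have hex : e n x.val = jn n - 1 - x.val := by simp only [hedef, if_pos hx.2]
        have hey : e n y.val = jn n - 1 - y.val := by simp only [hedef, if_pos hy.2]
        rw [hex, hey] at hxy
        have hx2 := hx.2; have hy2 := hy.2
        apply Fin.ext
        omega
      · intro j hj
        rw [Finset.mem_filter] at hj
        have hne := hGoodBad j hj.1 n hn
        have hex : e n j.val = jn n - 1 - j.val := by simp only [hedef, if_pos hj.2]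
        have hj2 := hj.2
        omega
    have h2 : ∑ j ∈ Good.filter (fun j => ¬ j.val < jn n), q ^ (e n j.val) ≤ q * (1-q)⁻¹ := by
      apply aux_geom_one q hq0.le hq1
      · intro x hx y hy hxy
        simp only [Finset.coe_filter, Set.mem_setOf_eq] at hx hy
        simp only [] at hxy
        have hex : e n x.val = x.val - jn n := by simp only [hedef, if_neg hx.2]
        have hey : e n y.val = y.val - jn n := by simp only [hedef, if_neg hy.2]
        rw [hex, hey] at hxy
        have hx2 := hx.2; have hy2 := hy.2
        apply Fin.ext
        omega
      · intro j hj
        rw [Finset.mem_filter] at hj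
        have hne := hGoodBad j hj.1 n hn
        have hex : e n j.val = j.val - jn n := by simp only [hedef, if_neg hj.2]
        have hj2 := hj.2
        omega
    linarith
  have hψm1 : 0 < ψ ((m:ℝ)+1) := hψ.pos _ (by positivity)
  set κ : ℝ := max (2*q*((1-q)*ψ 1)⁻¹) (2*((1-q)*ψ ((m:ℝ)+1))⁻¹) with hκdef
  have h1q : 0 < 1 - q := by linarith
  have hκ0 : 0 < κ := by
    apply lt_max_of_lt_right
    exact mul_pos two_pos (inv_pos.2 (mul_pos h1q hψm1))
  have hcapκ : ∀ n, ∑ j ∈ Good, q ^ (e n j.val) ≤ κ * ψ ((n:ℝ)+1) := by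
    intro n
    have hn0 : (0:ℝ) ≤ (n:ℝ) := Nat.cast_nonneg n
    have hψn1 : ψ 1 ≤ ψ ((n:ℝ)+1) :=
      hψ.mono (by norm_num) (by simp; linarith) (by linarith)
    by_cases hnm : n < m
    · calc ∑ j ∈ Good, q ^ (e n j.val) ≤ 2*(q*(1-q)⁻¹) := hcap_cheap n hnm
        _ = (2*q*((1-q)*ψ 1)⁻¹) * ψ 1 := by
            rw [mul_inv]
            field_simp
        _ ≤ κ * ψ 1 := mul_le_mul_of_nonneg_right (le_max_left _ _) hψ1.le
        _ ≤ κ * ψ ((n:ℝ)+1) := mul_le_mul_of_nonneg_left hψn1 hκ0.le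
    · have hmn : m ≤ n := not_lt.1 hnm
      have hψmn : ψ ((m:ℝ)+1) ≤ ψ ((n:ℝ)+1) := by
        apply hψ.mono (by simp only [Set.mem_Ici]; positivity) (by simp only [Set.mem_Ici]; positivity)
        have : (m:ℝ) ≤ (n:ℝ) := Nat.cast_le.2 hmn
        linarith
      calc ∑ j ∈ Good, q ^ (e n j.val) ≤ 2*(1-q)⁻¹ := hcap_all n
        _ = (2*((1-q)*ψ ((m:ℝ)+1))⁻¹) * ψ ((m:ℝ)+1) := by
            rw [mul_inv]
            field_simp
        _ ≤ κ * ψ ((m:ℝ)+1) := mul_le_mul_of_nonneg_right (le_max_right _ _) hψm1.le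
        _ ≤ κ * ψ ((n:ℝ)+1) := mul_le_mul_of_nonneg_left hψmn hκ0.le
  have hvpos : ∀ j : Fin (2*N), 0 < a j.val * t j.val := fun j => mul_pos (ha _) (tpos _)
  have hstep3 : ∀ j ∈ Good, (1:ℝ≥0∞) ≤ ENNReal.ofReal ((a j.val * t j.val)⁻¹) *
      ∑' n, ∫⁻ x in A j, ENNReal.ofReal (g n x) ∂μ01 := by
    intro j _
    calc (1:ℝ≥0∞) = ENNReal.ofReal ((a j.val*t j.val)⁻¹ * (a j.val*t j.val)) := by
          rw [inv_mul_cancel₀ (ne_of_gt (hvpos j)), ENNReal.ofReal_one]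
      _ = ENNReal.ofReal ((a j.val*t j.val)⁻¹) * ENNReal.ofReal (a j.val*t j.val) :=
          ENNReal.ofReal_mul (inv_nonneg.2 (hvpos j).le)
      _ ≤ _ := mul_le_mul_right (hscale j) _
  have hperj : ∀ n, ∀ j ∈ Good, ENNReal.ofReal ((a j.val*t j.val)⁻¹) *
      (∫⁻ x in A j, ENNReal.ofReal (g n x) ∂μ01) ≤
      ENNReal.ofReal (2*(N:ℝ)*u n * q^(e n j.val)) := by
    intro n j _
    calc ENNReal.ofReal ((a j.val*t j.val)⁻¹) * (∫⁻ x in A j, ENNReal.ofReal (g n x) ∂μ01)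
        ≤ ENNReal.ofReal ((a j.val*t j.val)⁻¹) *
          ENNReal.ofReal (u n * q ^ (e n j.val) * (t j.val / φ (t j.val))) :=
          mul_le_mul_right (hKEY n j) _
      _ = ENNReal.ofReal ((a j.val*t j.val)⁻¹ *
          (u n * q^(e n j.val) * (t j.val/φ (t j.val)))) :=
          (ENNReal.ofReal_mul (inv_nonneg.2 (hvpos j).le)).symm
      _ = ENNReal.ofReal (2*(N:ℝ)*u n * q^(e n j.val)) := by
          congr 1
          have hat : a j.val * t j.val = t j.val/(2*(N:ℝ)*φ (t j.val)) := by
            simp only [hadef]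
            ring
          rw [hat]
          have h1 : φ (t j.val) ≠ 0 := ne_of_gt (hφt j.val)
          have h2 : t j.val ≠ 0 := ne_of_gt (tpos j.val)
          have h3 : (N:ℝ) ≠ 0 := ne_of_gt hNpos
          field_simp
  have hsum_n : ∀ n, ∑ j ∈ Good, ENNReal.ofReal (2*(N:ℝ)*u n * q^(e n j.val)) ≤
      ENNReal.ofReal ((2*(N:ℝ)*κ) * (ψ ((n:ℝ)+1) * u n)) := by
    intro n
    have hnn : ∀ j ∈ Good, 0 ≤ 2*(N:ℝ)*u n * q^(e n j.val) := by
      intro j _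
      apply mul_nonneg (mul_nonneg (by positivity) (hu0 n)) (by positivity)
    rw [← ENNReal.ofReal_sum_of_nonneg hnn]
    apply ENNReal.ofReal_le_ofReal
    calc ∑ j ∈ Good, 2*(N:ℝ)*u n * q^(e n j.val)
        = (2*(N:ℝ)*u n) * ∑ j ∈ Good, q^(e n j.val) := by rw [Finset.mul_sum]
      _ ≤ (2*(N:ℝ)*u n) * (κ * ψ ((n:ℝ)+1)) := by
          apply mul_le_mul_of_nonneg_left (hcapκ n)
          exact mul_nonneg (by positivity) (hu0 n)
      _ = (2*(N:ℝ)*κ) * (ψ ((n:ℝ)+1) * u n) := by ring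
  have hmain : (N:ℝ≥0∞) ≤ ENNReal.ofReal (2*(N:ℝ)*κ) * seqCost φ ψ g := by
    calc (N:ℝ≥0∞) ≤ (Good.card : ℝ≥0∞) := Nat.cast_le.2 hGoodcard
      _ = ∑ _j ∈ Good, (1:ℝ≥0∞) := by
          rw [Finset.sum_const, nsmul_eq_mul, mul_one]
      _ ≤ ∑ j ∈ Good, ENNReal.ofReal ((a j.val*t j.val)⁻¹) *
          ∑' n, ∫⁻ x in A j, ENNReal.ofReal (g n x) ∂μ01 := Finset.sum_le_sum hstep3
      _ = ∑ j ∈ Good, ∑' n, ENNReal.ofReal ((a j.val*t j.val)⁻¹) *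
          ∫⁻ x in A j, ENNReal.ofReal (g n x) ∂μ01 :=
          Finset.sum_congr rfl (fun j _ => ENNReal.tsum_mul_left.symm)
      _ = ∑' n, ∑ j ∈ Good, ENNReal.ofReal ((a j.val*t j.val)⁻¹) *
          ∫⁻ x in A j, ENNReal.ofReal (g n x) ∂μ01 :=
          (Summable.tsum_finsetSum (fun j _ => ENNReal.summable)).symm
      _ ≤ ∑' n : ℕ, ENNReal.ofReal ((2*(N:ℝ)*κ) * (ψ ((n:ℝ)+1) * u n)) :=
          ENNReal.tsum_le_tsum (fun n =>
            le_trans (Finset.sum_le_sum (hperj n)) (hsum_n n))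
      _ = ∑' n : ℕ, ENNReal.ofReal (2*(N:ℝ)*κ) * ENNReal.ofReal (ψ ((n:ℝ)+1) * u n) :=
          tsum_congr (fun n => ENNReal.ofReal_mul (by positivity))
      _ = ENNReal.ofReal (2*(N:ℝ)*κ) * ∑' n : ℕ, ENNReal.ofReal (ψ ((n:ℝ)+1) * u n) :=
          ENNReal.tsum_mul_left
      _ = ENNReal.ofReal (2*(N:ℝ)*κ) * seqCost φ ψ g := by
          congr 1
          rw [seqCost]
          apply tsum_congr
          intro n
          congr 1
          simp only [hudef, hhhdef, hrrdef, hHdef, hLdef]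
          ring
  have hψhalf : ψ (N:ℝ) / 2 ≤ ψ ((m:ℝ)+1) := by
    have h1 := aux_psi_half ψ hψ.concave hψ.zero (N:ℝ) (by positivity)
    have h2 : ψ ((N:ℝ)/2) ≤ ψ ((m:ℝ)+1) := by
      apply hψ.mono (by simp only [Set.mem_Ici]; positivity)
        (by simp only [Set.mem_Ici]; positivity)
      have hcast : (N:ℝ) ≤ 2*(m:ℝ)+2 := by
        have : N ≤ 2*m+2 := by omega
        exact_mod_cast this
      linarith
    linarith
  have hκD : κ ≤ (2*D)⁻¹ := by
    have hX : (0:ℝ) < (2:ℝ)^c - 1 := by linarith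
    have hqX : q * (((2:ℝ)^c - 1) * ψ (N:ℝ)) ≤ ψ 1 :=
      (le_div_iff₀ (mul_pos hX hψN)).1 hq4
    apply max_le
    · rw [← div_eq_mul_inv, div_le_iff₀ (mul_pos h1q hψ1), hDdef]
      rw [le_inv_mul_iff₀ (by positivity : (0:ℝ) < 2*(((2:ℝ)^c-1)/8*ψ (N:ℝ)))]
      nlinarith [hq2, hψ1, hψN, hqX]
    · rw [← div_eq_mul_inv, div_le_iff₀ (mul_pos h1q hψm1), hDdef]
      rw [le_inv_mul_iff₀ (by positivity : (0:ℝ) < 2*(((2:ℝ)^c-1)/8*ψ (N:ℝ)))]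
      nlinarith [hq3, hψhalf, hψN, h1q, hψm1, hX]
  have hne0 : ENNReal.ofReal (2*(N:ℝ)*κ) ≠ 0 := by
    rw [Ne, ENNReal.ofReal_eq_zero, not_le]
    positivity
  have hnetop : ENNReal.ofReal (2*(N:ℝ)*κ) ≠ ⊤ := ENNReal.ofReal_ne_top
  rw [← ENNReal.mul_le_mul_iff_right hne0 hnetop]
  have hDκ : 2*(N:ℝ)*κ*D ≤ (N:ℝ) := by
    have h2D : 0 < 2*D := by linarith
    have := mul_le_mul_of_nonneg_left hκD h2D.le
    rw [mul_inv_cancel₀ (ne_of_gt h2D)] at this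
    nlinarith [this, hNpos]
  calc ENNReal.ofReal (2*(N:ℝ)*κ) * ENNReal.ofReal D
      = ENNReal.ofReal ((2*(N:ℝ)*κ) * D) := (ENNReal.ofReal_mul (by positivity)).symm
    _ ≤ (N:ℝ≥0∞) := by
        rw [← ENNReal.ofReal_natCast N]
        exact ENNReal.ofReal_le_ofReal hDκ
    _ ≤ ENNReal.ofReal (2*(N:ℝ)*κ) * seqCost φ ψ g := hmain

end
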